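/- Let S be a proper set of intervals sorted by right endpoints, and let t be any interval. If t intersects both s_i and s_{j'} with i < j < j', then t intersects s_j. In other words, for any interval t, the set of indices of intervals in S intersecting t is a set of consecutive integers. -/
import Mathlib


/-- For a proper set of intervals sorted by right endpoints (hence
also by left endpoints), the set of intervals intersecting any fixed interval `t = [a,b]`
is consecutive: if `t` meets `s_i` and `s_{j'}` with `i < j < j'`, then `t` meets `s_j`. -/
theorem proper_intervals_consecutive_intersection {k : ℕ} (l r : Fin k → ℝ)
    (hlr : ∀ i, l i ≤ r i)
    (hr : StrictMono r) (hl : StrictMono l)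
    (a b : ℝ) (hab : a ≤ b)
    (i j j' : Fin k) (hij : i < j) (hjj' : j < j')
    (hi : (Set.Icc a b ∩ Set.Icc (l i) (r i)).Nonempty)
    (hj' : (Set.Icc a b ∩ Set.Icc (l j') (r j')).Nonempty) :
    (Set.Icc a b ∩ Set.Icc (l j) (r j)).Nonempty := by
  obtain ⟨x, ⟨hxa, hxb⟩, hxl, hxr⟩ := hi
  obtain ⟨y, ⟨hya, hyb⟩, hyl, hyr⟩ := hj'
  refine ⟨max a (l j), ⟨le_max_left _ _, max_le ?_ ?_⟩, le_max_right _ _, max_le ?_ (hlr j)⟩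
  · exact hab
  · exact le_trans (le_of_lt (hl hjj')) (le_trans hyl hyb)
  · exact le_trans (le_trans hxa hxr) (le_of_lt (hr hij))
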